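/- Let a ≈ 0.43586652150845 be the root of 6a³ − 18a² + 9a − 1 = 0 lying in (0.4, 0.5). Then the cubic in γ given by 4a³γ³ − 12a(15a²−10a+1)γ² + 3a(374a²−228a+33)γ + 4(813a²−486a+175/3) = 0 has three distinct real roots, all negative. -/
import Mathlib

theorem gamma_cubic_three_negative_roots (a : ℝ)
    (ha : 6*a^3 - 18*a^2 + 9*a - 1 = 0) (ha1 : 0.4 < a) (ha2 : a < 0.5) :
    ∃ g₁ g₂ g₃ : ℝ, g₁ ≠ g₂ ∧ g₁ ≠ g₃ ∧ g₂ ≠ g₃ ∧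
      g₁ < 0 ∧ g₂ < 0 ∧ g₃ < 0 ∧
      (∀ g ∈ ({g₁, g₂, g₃} : Set ℝ),
        4*a^3*g^3 - 12*a*(15*a^2 - 10*a + 1)*g^2 + 3*a*(374*a^2 - 228*a + 33)*g
          + 4*(813*a^2 - 486*a + 175/3) = 0) ∧
      (∀ g : ℝ,
        4*a^3*g^3 - 12*a*(15*a^2 - 10*a + 1)*g^2 + 3*a*(374*a^2 - 228*a + 33)*g
          + 4*(813*a^2 - 486*a + 175/3) = 0 → g = g₁ ∨ g = g₂ ∨ g = g₃) := by
  have hl : (0.4358:ℝ) < a := by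
    nlinarith [sq_nonneg (a-0.4358), sq_nonneg (a-0.4359), sq_nonneg a]
  have hu : a < 0.4359 := by
    nlinarith [sq_nonneg (a-0.4358), sq_nonneg (a-0.4359), sq_nonneg a]
  set f : ℝ → ℝ := fun g => 4*a^3*g^3 - 12*a*(15*a^2 - 10*a + 1)*g^2
      + 3*a*(374*a^2 - 228*a + 33)*g + 4*(813*a^2 - 486*a + 175/3) with hf
  have hcont : Continuous f := by fun_prop
  have h5 : f (-5) < 0 := by
    simp only [hf]; nlinarith [sq_nonneg (a-0.43586), sq_nonneg a]
  have h3 : f (-3) > 0 := by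
    simp only [hf]; nlinarith [sq_nonneg (a-0.43586), sq_nonneg a]
  have h2 : f (-2) < 0 := by
    simp only [hf]; nlinarith [sq_nonneg (a-0.43586), sq_nonneg a]
  have h0 : f 0 > 0 := by
    simp only [hf]; nlinarith [sq_nonneg (a-0.43586), sq_nonneg a]
  obtain ⟨g₁, hg₁m, hg₁⟩ := intermediate_value_Ioo (by norm_num : (-5:ℝ) ≤ -3)
    hcont.continuousOn ⟨h5, h3⟩
  obtain ⟨g₂, hg₂m, hg₂⟩ := intermediate_value_Ioo' (by norm_num : (-3:ℝ) ≤ -2)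
    hcont.continuousOn ⟨h2, h3⟩
  obtain ⟨g₃, hg₃m, hg₃⟩ := intermediate_value_Ioo (by norm_num : (-2:ℝ) ≤ 0)
    hcont.continuousOn ⟨h2, h0⟩
  obtain ⟨hg₁a, hg₁b⟩ := hg₁m
  obtain ⟨hg₂a, hg₂b⟩ := hg₂m
  obtain ⟨hg₃a, hg₃b⟩ := hg₃m
  have hA : 4*a^3 ≠ 0 := by positivity
  -- quadratic factor after dividing out (x - g₁)
  have hq : ∀ x : ℝ, f x = 0 → x ≠ g₁ →
      4*a^3*(x^2 + x*g₁ + g₁^2) - 12*a*(15*a^2 - 10*a + 1)*(x + g₁)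
        + 3*a*(374*a^2 - 228*a + 33) = 0 := by
    intro x hx hne
    have key : (x - g₁) * (4*a^3*(x^2 + x*g₁ + g₁^2)
        - 12*a*(15*a^2 - 10*a + 1)*(x + g₁) + 3*a*(374*a^2 - 228*a + 33)) = 0 := by
      simp only [hf] at hx hg₁; linear_combination hx - hg₁
    rcases mul_eq_zero.1 key with h | h
    · exact absurd (sub_eq_zero.1 h) hne
    · exact h
  have hlin : ∀ x : ℝ, f x = 0 → x ≠ g₁ → x ≠ g₂ →
      4*a^3*(x + g₁ + g₂) - 12*a*(15*a^2 - 10*a + 1) = 0 := by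
    intro x hx hne1 hne2
    have q1 := hq x hx hne1
    have q2 := hq g₂ hg₂ (by intro h; rw [h] at hg₂a; linarith)
    have key : (x - g₂) * (4*a^3*(x + g₁ + g₂) - 12*a*(15*a^2 - 10*a + 1)) = 0 := by
      linear_combination q1 - q2
    rcases mul_eq_zero.1 key with h | h
    · exact absurd (sub_eq_zero.1 h) hne2
    · exact h
  refine ⟨g₁, g₂, g₃, by linarith, by linarith, by linarith, by linarith, by linarith,
    by linarith, ?_, ?_⟩
  · rintro g (rfl | rfl | rfl)
    · exact hg₁
    · exact hg₂
    · exact hg₃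
  · intro g hg
    by_contra hcon
    push_neg at hcon
    obtain ⟨hn1, hn2, hn3⟩ := hcon
    have l1 := hlin g hg hn1 hn2
    have l2 := hlin g₃ hg₃ (by intro h; rw [h] at hg₃a; linarith)
      (by intro h; rw [h] at hg₃a; linarith)
    have : 4*a^3*(g - g₃) = 0 := by linear_combination l1 - l2
    exact hn3 (by have := mul_eq_zero.1 this; rcases this with h | h
                  · exact absurd h hA
                  · linarith [sub_eq_zero.1 h])
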